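/- If a Boolean function f depends on all n of its input variables, then Γ^1(f) + Γ^0(f) ≥ n + 1. -/

import Mathlib

attribute [local instance] Classical.propDecidable

/-- `b'` extends the partial assignment `b`: it agrees on all non-`*` coordinates of `b`. -/
def Extends {n : ℕ} (b' b : Fin n → Option Bool) : Prop :=
  ∀ i v, b i = some v → b' i = some v

/-- A total assignment `x` extends the partial assignment `b`. -/
def TExtends {n : ℕ} (x : Fin n → Bool) (b : Fin n → Option Bool) : Prop :=
  ∀ i v, b i = some v → x i = v

/-- `b` is a certificate of `f`: `f` is constant on all total extensions of `b`. -/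
def IsCert {n : ℕ} (f : (Fin n → Bool) → Bool) (b : Fin n → Option Bool) : Prop :=
  ∀ x y, TExtends x b → TExtends y b → f x = f y

/-- `b` is a `k`-certificate of `f`: it forces `f` to the value `k`. -/
def IsKCert {n : ℕ} (f : (Fin n → Bool) → Bool) (k : Bool) (b : Fin n → Option Bool) : Prop :=
  ∀ x, TExtends x b → f x = k

/-- A certificate is minimal if no proper restriction of it is a certificate. -/
def MinCert {n : ℕ} (f : (Fin n → Bool) → Bool) (c : Fin n → Option Bool) : Prop :=
  IsCert f c ∧ ∀ c', Extends c c' → c' ≠ c → ¬ IsCert f c'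

/-- A `k`-certificate is minimal if no proper restriction of it is a `k`-certificate. -/
def MinKCert {n : ℕ} (f : (Fin n → Bool) → Bool) (k : Bool) (c : Fin n → Option Bool) : Prop :=
  IsKCert f k c ∧ ∀ c', Extends c c' → c' ≠ c → ¬ IsKCert f k c'

/-- Monotone utility function: filling in `*`'s never decreases the value. -/
def Mono {n : ℕ} (g : (Fin n → Option Bool) → ℕ) : Prop :=
  ∀ b b', Extends b' b → g b ≤ g b'

/-- Submodular utility function: marginal gains shrink under extension. -/
def Submod {n : ℕ} (g : (Fin n → Option Bool) → ℕ) : Prop :=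
  ∀ b b' (i : Fin n) (ℓ : Bool), Extends b' b → b i = none → b' i = none →
    g (Function.update b' i (some ℓ)) + g b ≤ g (Function.update b i (some ℓ)) + g b'

/-- `g` is a goal function for `f` with goal value `Q`. -/
def GoalFn {n : ℕ} (f : (Fin n → Bool) → Bool) (g : (Fin n → Option Bool) → ℕ)
    (Q : ℕ) : Prop :=
  Mono g ∧ Submod g ∧ ∀ b, g b = Q ↔ IsCert f b

/-- `g` is a `k`-goal function for `f` with goal value `Q`. -/
def KGoalFn {n : ℕ} (f : (Fin n → Bool) → Bool) (k : Bool)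
    (g : (Fin n → Option Bool) → ℕ) (Q : ℕ) : Prop :=
  Mono g ∧ Submod g ∧ (∀ b, IsKCert f k b → g b = Q) ∧ (∀ b, ¬ IsKCert f k b → g b < Q)

/-- The goal value `Γ(f)`: the minimum goal value of any goal function for `f`. -/
noncomputable def gamma {n : ℕ} (f : (Fin n → Bool) → Bool) : ℕ :=
  sInf {Q | ∃ g, GoalFn f g Q}

/-- The `k`-goal value `Γ^k(f)`. -/
noncomputable def gammaK {n : ℕ} (f : (Fin n → Bool) → Bool) (k : Bool) : ℕ :=
  sInf {Q | ∃ g, KGoalFn f k g Q}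

/-- The weight of a partial assignment: the number of non-`*` coordinates. -/
noncomputable def wt {n : ℕ} (b : Fin n → Option Bool) : ℕ :=
  (Finset.univ.filter (fun i => (b i).isSome)).card

/-- `f` depends on its `i`-th variable. -/
def DependsOnVar {n : ℕ} (f : (Fin n → Bool) → Bool) (i : Fin n) : Prop :=
  ∃ x, f (Function.update x i true) ≠ f (Function.update x i false)

namespace Stmt6Proof

open Finset

variable {n : ℕ}

/-- sensitivity of `f` to variable `i` within the subcube determined by `c`. -/
def RDep (f : (Fin n → Bool) → Bool) (c : Fin n → Option Bool) (i : Fin n) : Prop :=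
  ∃ x, TExtends x c ∧ f (Function.update x i true) ≠ f (Function.update x i false)

lemma textends_update_iff {b : Fin n → Option Bool} {i : Fin n} (hb : b i = none) (ℓ : Bool)
    (x : Fin n → Bool) :
    TExtends x (Function.update b i (some ℓ)) ↔ TExtends x b ∧ x i = ℓ := by
  constructor
  · intro h
    refine ⟨fun p v hp => ?_, h i ℓ (by simp)⟩
    have hpi : p ≠ i := by rintro rfl; rw [hb] at hp; cases hp
    exact h p v (by rwa [Function.update_of_ne hpi])
  · rintro ⟨h1, h2⟩ p v hp
    rcases eq_or_ne p i with rfl | hpi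
    · rw [Function.update_self] at hp
      cases hp; exact h2
    · rw [Function.update_of_ne hpi] at hp
      exact h1 p v hp

lemma extends_update {c : Fin n → Option Bool} {i : Fin n} (hc : c i = none) (ℓ : Bool) :
    Extends (Function.update c i (some ℓ)) c := by
  intro p v hp
  have hpi : p ≠ i := by rintro rfl; rw [hc] at hp; cases hp
  rwa [Function.update_of_ne hpi]


lemma marg {f : (Fin n → Bool) → Bool} {g : (Fin n → Option Bool) → ℕ} {k : Bool} {Q : ℕ}
    (hg : KGoalFn f k g Q) {c : Fin n → Option Bool} {i : Fin n} (hc : c i = none)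
    {x : Fin n → Bool} (hx : TExtends x c) (ℓ : Bool)
    (hk : f (Function.update x i ℓ) = k) (hnk : f (Function.update x i (!ℓ)) ≠ k) :
    g c + 1 ≤ g (Function.update c i (some ℓ)) := by
  classical
  set b' : Fin n → Option Bool := fun p => if p = i then none else some (x p) with hb'
  have hb'i : b' i = none := by simp [hb']
  have hExt : Extends b' c := by
    intro p v hp
    have hpi : p ≠ i := by rintro rfl; rw [hc] at hp; cases hp
    simp [hb', hpi, hx p v hp]
  have hcert : IsKCert f k (Function.update b' i (some ℓ)) := by
    intro z hz
    have hzx : z = Function.update x i ℓ := by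
      funext p
      rcases eq_or_ne p i with rfl | hpi
      · rw [Function.update_self]
        exact hz p ℓ (by simp)
      · rw [Function.update_of_ne hpi]
        exact hz p (x p) (by simp [hb', hpi])
    rw [hzx, hk]
  have hncert : ¬ IsKCert f k b' := by
    intro h
    apply hnk
    apply h
    intro p v hp
    have hpi : p ≠ i := by rintro rfl; simp [hb'] at hp
    simp [hb', hpi] at hp
    rw [Function.update_of_ne hpi, hp]
  have h1 : g (Function.update b' i (some ℓ)) = Q := hg.2.2.1 _ hcert
  have h2 : g b' < Q := hg.2.2.2 _ hncert
  have h3 := hg.2.1 c b' i ℓ hExt hc hb'i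
  omega

lemma marg2 {f : (Fin n → Bool) → Bool} {g0 g1 : (Fin n → Option Bool) → ℕ} {Q0 Q1 : ℕ}
    (h0 : KGoalFn f false g0 Q0) (h1 : KGoalFn f true g1 Q1)
    {c : Fin n → Option Bool} {i : Fin n} (hc : c i = none) (hd : RDep f c i) (ℓ : Bool) :
    g0 c + g1 c + 1 ≤ g0 (Function.update c i (some ℓ)) + g1 (Function.update c i (some ℓ)) := by
  obtain ⟨x, hx, hsens⟩ := hd
  have hne : f (Function.update x i ℓ) ≠ f (Function.update x i (!ℓ)) := by
    cases ℓ
    · exact fun h => hsens h.symm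
    · exact hsens
  cases hfy : f (Function.update x i ℓ)
  · have hA := marg h0 hc hx ℓ hfy (by rw [hfy] at hne; exact fun h => hne h.symm)
    have hB := h1.1 c _ (extends_update hc ℓ)
    omega
  · have hA := marg h1 hc hx ℓ hfy (by rw [hfy] at hne; exact fun h => hne h.symm)
    have hB := h0.1 c _ (extends_update hc ℓ)
    omega


lemma card_none_update {c : Fin n → Option Bool} {i : Fin n} (hc : c i = none) (ℓ : Bool) {m : ℕ}
    (h : (univ.filter (fun j => c j = none)).card = m + 1) :
    (univ.filter (fun j => Function.update c i (some ℓ) j = none)).card = m := by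
  classical
  have hset : univ.filter (fun j => Function.update c i (some ℓ) j = none)
      = (univ.filter (fun j => c j = none)).erase i := by
    ext j
    simp only [mem_filter, mem_erase, mem_univ, true_and]
    rcases eq_or_ne j i with rfl | hji
    · simp
    · simp [Function.update_of_ne hji, hji]
  rw [hset, card_erase_of_mem (by simp [hc]), h]
  omega

lemma comb {f : (Fin n → Bool) → Bool} {c : Fin n → Option Bool} {m : ℕ}
    (hdep : ∀ i, c i = none → RDep f c i)
    (hcard : (univ.filter (fun j => c j = none)).card = m + 1) :
    ∃ i, c i = none ∧ ∃ ℓ : Bool, ∀ j, Function.update c i (some ℓ) j = none →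
      RDep f (Function.update c i (some ℓ)) j := by
  classical
  set S : Finset (Fin n × Bool) := univ.filter (fun p => c p.1 = none) with hS
  have hSne : S.Nonempty := by
    have : (univ.filter (fun j => c j = none)).Nonempty := by
      rw [← card_pos, hcard]; omega
    obtain ⟨i, hi⟩ := this
    simp only [mem_filter, mem_univ, true_and] at hi
    exact ⟨(i, true), by simp [hS, hi]⟩
  set relset : Fin n × Bool → Finset (Fin n) := fun p =>
    univ.filter (fun j => Function.update c p.1 (some p.2) j = none ∧
      RDep f (Function.update c p.1 (some p.2)) j) with hrelset
  obtain ⟨p, hpS, hmax⟩ := S.exists_max_image (fun p => (relset p).card) hSne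
  obtain ⟨i, ℓ⟩ := p
  have hci : c i = none := by simpa [hS] using hpS
  refine ⟨i, hci, ℓ, ?_⟩
  by_contra hno
  push_neg at hno
  obtain ⟨j, hjnone, hjndep⟩ := hno
  have hji : j ≠ i := by
    rintro rfl
    rw [Function.update_self] at hjnone
    cases hjnone
  have hcj : c j = none := by rwa [Function.update_of_ne hji] at hjnone
  obtain ⟨x, hx, hxs⟩ := hdep i hci
  set mm : Bool := x j with hmm
  -- claim : insert i (relset (i,ℓ)) ⊆ relset (j, mm)
  have hsub : insert i (relset (i, ℓ)) ⊆ relset (j, mm) := by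
    intro k hk
    rw [mem_insert] at hk
    rcases hk with rfl | hk
    · -- k = i
      simp only [hrelset, mem_filter, mem_univ, true_and]
      have hij : k ≠ j := fun h => hji h.symm
      refine ⟨by rwa [Function.update_of_ne hij], x, ?_, hxs⟩
      intro p v hp
      rcases eq_or_ne p j with rfl | hpj
      · rw [Function.update_self] at hp
        exact hmm.symm.trans (Option.some_injective _ hp)
      · rw [Function.update_of_ne hpj] at hp
        exact hx p v hp
    · simp only [hrelset, mem_filter, mem_univ, true_and] at hk ⊢
      obtain ⟨hknone, y, hy, hys⟩ := hk
      have hki : k ≠ i := by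
        rintro rfl
        rw [Function.update_self] at hknone
        cases hknone
      have hck : c k = none := by rwa [Function.update_of_ne hki] at hknone
      have hkj : k ≠ j := by
        rintro rfl
        exact hjndep ⟨y, hy, hys⟩
      have hjndep' : ∀ z, TExtends z (Function.update c i (some ℓ)) →
          ∀ b1 b2 : Bool, f (Function.update z j b1) = f (Function.update z j b2) := by
        intro z hz b1 b2
        have hzz : f (Function.update z j true) = f (Function.update z j false) := by
          by_contra hcon
          exact hjndep ⟨z, hz, hcon⟩
        cases b1 <;> cases b2 <;> simp [hzz]
      refine ⟨by rwa [Function.update_of_ne hkj], Function.update y j mm, ?_, ?_⟩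
      · intro p v hp
        rcases eq_or_ne p j with rfl | hpj
        · rw [Function.update_self] at hp
          injection hp with hv
          rw [← hv, Function.update_self]
        · rw [Function.update_of_ne hpj] at hp
          rw [Function.update_of_ne hpj]
          have hpi : p ≠ i := by
            rintro rfl; rw [hci] at hp; cases hp
          exact hy p v (by rwa [Function.update_of_ne hpi])
      · have hkey : ∀ b : Bool, f (Function.update (Function.update y j mm) k b)
            = f (Function.update y k b) := by
          intro b
          have e1 : Function.update (Function.update y j mm) k b
              = Function.update (Function.update y k b) j mm :=
            (Function.update_comm hkj _ _ _).symm
          have hz : TExtends (Function.update y k b) (Function.update c i (some ℓ)) := by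
            intro p v hp
            have hpk : p ≠ k := by
              rintro rfl
              rw [Function.update_of_ne hki, hck] at hp
              cases hp
            rw [Function.update_of_ne hpk]
            exact hy p v hp
          have h2 := hjndep' _ hz mm ((Function.update y k b) j)
          rw [e1, h2, Function.update_eq_self]
        rw [hkey true, hkey false]
        exact hys
  have hinot : i ∉ relset (i, ℓ) := by
    simp [hrelset]
  have hjS : (j, mm) ∈ S := by simp [hS, hcj]
  have h1 := card_le_card hsub
  rw [card_insert_of_notMem hinot] at h1
  have h2 := hmax (j, mm) hjS
  omega


lemma key {f : (Fin n → Bool) → Bool} {g0 g1 : (Fin n → Option Bool) → ℕ} {Q0 Q1 : ℕ}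
    (h0 : KGoalFn f false g0 Q0) (h1 : KGoalFn f true g1 Q1) :
    ∀ m (c : Fin n → Option Bool), (univ.filter (fun j => c j = none)).card = m →
      (∀ i, c i = none → RDep f c i) →
      m + 1 + (g0 c + g1 c) ≤ Q0 + Q1 := by
  intro m
  induction m with
  | zero =>
    intro c hcard hdep
    have htot : ∀ j, ∃ v, c j = some v := by
      intro j
      cases hcj : c j with
      | none =>
        exfalso
        have : j ∈ univ.filter (fun j => c j = none) := by simp [hcj]
        rw [card_eq_zero] at hcard
        simp [hcard] at this
      | some v => exact ⟨v, rfl⟩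
    choose x hx using htot
    have hxe : TExtends x c := by
      intro p v hp
      rw [hx p] at hp
      exact Option.some_injective _ hp
    have huniq : ∀ z, TExtends z c → z = x := by
      intro z hz
      funext p
      exact hz p (x p) (hx p)
    cases hfx : f x with
    | false =>
      have hc0 : g0 c = Q0 := h0.2.2.1 c (fun z hz => by rw [huniq z hz, hfx])
      have hc1 : g1 c < Q1 := h1.2.2.2 c (by
        intro h
        have := h x hxe
        rw [hfx] at this
        exact Bool.noConfusion this)
      omega
    | true =>
      have hc1 : g1 c = Q1 := h1.2.2.1 c (fun z hz => by rw [huniq z hz, hfx])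
      have hc0 : g0 c < Q0 := h0.2.2.2 c (by
        intro h
        have := h x hxe
        rw [hfx] at this
        exact Bool.noConfusion this)
      omega
  | succ m ih =>
    intro c hcard hdep
    obtain ⟨i, hci, ℓ, hall⟩ := comb hdep hcard
    have hm := marg2 h0 h1 hci (hdep i hci) ℓ
    have hc' := card_none_update hci ℓ hcard
    have := ih (Function.update c i (some ℓ)) hc' (fun j hj => hall j hj)
    omega


/-- number of total extensions of `b` on which `f` differs from `k`. -/
noncomputable def cnt (f : (Fin n → Bool) → Bool) (k : Bool) (b : Fin n → Option Bool) : ℕ :=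
  (univ.filter (fun x : Fin n → Bool => TExtends x b ∧ f x ≠ k)).card

lemma cnt_le (f : (Fin n → Bool) → Bool) (k : Bool) (b : Fin n → Option Bool) :
    cnt f k b ≤ Fintype.card (Fin n → Bool) := by
  classical
  rw [← Finset.card_univ]
  exact card_le_card (filter_subset _ _)

lemma cnt_mono (f : (Fin n → Bool) → Bool) (k : Bool) {b b' : Fin n → Option Bool}
    (h : Extends b' b) : cnt f k b' ≤ cnt f k b := by
  classical
  apply card_le_card
  intro x hx
  simp only [mem_filter, mem_univ, true_and] at hx ⊢
  exact ⟨fun p v hp => hx.1 p v (h p v hp), hx.2⟩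

lemma cnt_split (f : (Fin n → Bool) → Bool) (k : Bool) {b : Fin n → Option Bool} {i : Fin n}
    (hb : b i = none) (ℓ : Bool) :
    cnt f k b = cnt f k (Function.update b i (some ℓ))
      + (univ.filter (fun x : Fin n → Bool => (TExtends x b ∧ f x ≠ k) ∧ x i ≠ ℓ)).card := by
  classical
  have hsplit := Finset.card_filter_add_card_filter_not
    (s := univ.filter (fun x : Fin n → Bool => TExtends x b ∧ f x ≠ k))
    (p := fun x => x i = ℓ)
  have e1 : (univ.filter (fun x : Fin n → Bool => TExtends x b ∧ f x ≠ k)).filter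
        (fun x => x i = ℓ)
      = univ.filter (fun x : Fin n → Bool =>
          TExtends x (Function.update b i (some ℓ)) ∧ f x ≠ k) := by
    rw [filter_filter]
    apply filter_congr
    intro x _
    rw [textends_update_iff hb]
    tauto
  have e2 : (univ.filter (fun x : Fin n → Bool => TExtends x b ∧ f x ≠ k)).filter
        (fun x => ¬ x i = ℓ)
      = univ.filter (fun x : Fin n → Bool => (TExtends x b ∧ f x ≠ k) ∧ x i ≠ ℓ) := by
    rw [filter_filter]
  rw [e1, e2] at hsplit
  exact hsplit.symm

lemma submod_arith {Q A A' B B' D D' : ℕ} (h1 : A = B + D) (h2 : A' = B' + D')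
    (h3 : D' ≤ D) (h4 : A ≤ Q) (h5 : A' ≤ Q) (h6 : B ≤ Q) (h7 : B' ≤ Q) :
    Q - B' + (Q - A) ≤ Q - B + (Q - A') := by omega

lemma goal_exists (f : (Fin n → Bool) → Bool) (k : Bool) :
    ∃ Q g, KGoalFn f k g Q := by
  classical
  set Q : ℕ := Fintype.card (Fin n → Bool) with hQ
  refine ⟨Q, fun b => Q - cnt f k b, ?_, ?_, ?_, ?_⟩
  · intro b b' h
    exact Nat.sub_le_sub_left (cnt_mono f k h) Q
  · intro b b' i ℓ hext hb hb'
    show Q - cnt f k (Function.update b' i (some ℓ)) + (Q - cnt f k b)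
      ≤ Q - cnt f k (Function.update b i (some ℓ)) + (Q - cnt f k b')
    have h1 := cnt_split f k hb ℓ
    have h2 := cnt_split f k hb' ℓ
    have h3 : (univ.filter (fun x : Fin n → Bool => (TExtends x b' ∧ f x ≠ k) ∧ x i ≠ ℓ)).card
        ≤ (univ.filter (fun x : Fin n → Bool => (TExtends x b ∧ f x ≠ k) ∧ x i ≠ ℓ)).card := by
      apply card_le_card
      intro x hx
      simp only [mem_filter, mem_univ, true_and] at hx ⊢
      exact ⟨⟨fun p v hp => hx.1.1 p v (hext p v hp), hx.1.2⟩, hx.2⟩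
    exact submod_arith h1 h2 h3 (cnt_le f k b) (cnt_le f k b')
      (cnt_le f k (Function.update b i (some ℓ))) (cnt_le f k (Function.update b' i (some ℓ)))
  · intro b hb
    show Q - cnt f k b = Q
    have hz : cnt f k b = 0 := by
      show (univ.filter (fun x : Fin n → Bool => TExtends x b ∧ f x ≠ k)).card = 0
      rw [card_eq_zero]
      ext x
      simp only [mem_filter, mem_univ, true_and, notMem_empty, iff_false, not_and]
      intro hx
      simpa using hb x hx
    rw [hz]
    simp
  · intro b hb
    show Q - cnt f k b < Q
    have hpos : 0 < cnt f k b := by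
      show 0 < (univ.filter (fun x : Fin n → Bool => TExtends x b ∧ f x ≠ k)).card
      rw [card_pos]
      unfold IsKCert at hb
      push_neg at hb
      obtain ⟨x, hx, hfx⟩ := hb
      exact ⟨x, by simp [hx, hfx]⟩
    have hQpos : 0 < Q := Fintype.card_pos
    have := cnt_le f k b
    omega

end Stmt6Proof

/-- if `f` depends on all `n` of its variables, then `Γ¹(f) + Γ⁰(f) ≥ n + 1`. -/
theorem stmt6 {n : ℕ} (f : (Fin n → Bool) → Bool) (hdep : ∀ i, DependsOnVar f i) :
    n + 1 ≤ gammaK f true + gammaK f false := by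
  classical
  have hne1 : {Q | ∃ g, KGoalFn f true g Q}.Nonempty := by
    obtain ⟨Q, g, h⟩ := Stmt6Proof.goal_exists f true
    exact ⟨Q, g, h⟩
  have hne0 : {Q | ∃ g, KGoalFn f false g Q}.Nonempty := by
    obtain ⟨Q, g, h⟩ := Stmt6Proof.goal_exists f false
    exact ⟨Q, g, h⟩
  unfold gammaK
  obtain ⟨g1, h1⟩ := Nat.sInf_mem hne1
  obtain ⟨g0, h0⟩ := Nat.sInf_mem hne0
  have hcard : (Finset.univ.filter
      (fun j : Fin n => (fun _ : Fin n => (none : Option Bool)) j = none)).card = n := by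
    simp
  have hdep' : ∀ i : Fin n, (fun _ : Fin n => (none : Option Bool)) i = none →
      Stmt6Proof.RDep f (fun _ => none) i := by
    intro i _
    obtain ⟨x, hx⟩ := hdep i
    exact ⟨x, fun p v hp => by simp at hp, hx⟩
  have hkey := Stmt6Proof.key h0 h1 n (fun _ => none) hcard hdep'
  omega
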